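/- Let S ∈ {L,R}ⁿ and suppose {y_i}_{i∈ℤ/n} is an S-cycle of the piecewise-linear map (y_{i+1} = μb + A_{S_i} y_i) with two points y_j ≠ y_k on the switching manifold (e₁ᵀy_j = e₁ᵀy_k = 0) such that flipping the symbols at both j and k turns S into a cyclic permutation S^{(r)} of itself, r ≢ 0 mod n. Then I − M_S is singular, where M_S = A_{S_{n−1}}⋯A_{S_0}, provided the cycle {y_i} has minimal period n. -/

import Mathlib

open Matrix

/-- `M_S = A_{S_{n−1}} ⋯ A_{S_1} A_{S_0}`. -/
def wordProd {N n : ℕ} (A : Bool → Matrix (Fin N) (Fin N) ℝ)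
    (S : Fin n → Bool) : Matrix (Fin N) (Fin N) ℝ :=
  ((List.ofFn fun i => A (S i)).reverse).prod

/-- Suppose `{y_i}` is an `S`-cycle of the piecewise-linear map
(`y_{i+1} = μ b + A_{S_i} y_i`, symbols `true = L`, `false = R`, with `A_L`,
`A_R` agreeing in their last `N−1` columns) having two distinct points
`y_j ≠ y_k` on the switching manifold, such that flipping the symbols at `j`
and `k` turns `S` into a nontrivial cyclic permutation `S^{(r)}` of itself
(`r ≠ 0`).  If the cycle has minimal period `n`, then `I − M_S` is singular. -/
theorem one_sub_wordProd_singular {N n : ℕ} [NeZero N] [NeZero n]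
    (AL AR : Matrix (Fin N) (Fin N) ℝ)
    (hcol : ∀ j : Fin N, j ≠ 0 → ∀ i : Fin N, AL i j = AR i j)
    (A : Bool → Matrix (Fin N) (Fin N) ℝ)
    (hA : A = fun s => if s then AL else AR)
    (b : Fin N → ℝ) (μ : ℝ)
    (S : Fin n → Bool) (y : Fin n → Fin N → ℝ)
    (hcycle : ∀ i : Fin n, y (i + 1) = μ • b + (A (S i)).mulVec (y i))
    (j k : Fin n) (hjk : y j ≠ y k)
    (hj0 : y j 0 = 0) (hk0 : y k 0 = 0)
    (r : Fin n) (hr : r ≠ 0)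
    (hflip : ∀ i : Fin n,
      Function.update (Function.update S j (!S j)) k (!S k) i = S (i + r))
    (hmin : ∀ q : Fin n, q ≠ 0 → ∃ i : Fin n, y (i + q) ≠ y i) :
    (1 - wordProd A S).det = 0 := by
  by_contra hdet
  set S' : Fin n → Bool := Function.update (Function.update S j (!S j)) k (!S k) with hS'
  -- if v vanishes in coordinate 0, flipping the symbol doesn't change the image
  have hmv : ∀ (v : Fin N → ℝ), v 0 = 0 → ∀ s : Bool, (A (!s)).mulVec v = (A s).mulVec v := by
    intro v hv s
    have h0 : AL.mulVec v = AR.mulVec v := by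
      funext p
      simp only [Matrix.mulVec, dotProduct]
      refine Finset.sum_congr rfl ?_
      intro q _
      by_cases hq : q = 0
      · subst hq; simp [hv]
      · beta_reduce; rw [hcol q hq p]
    cases s <;> simp [hA, h0]
  have hflipstep : ∀ m : Fin n, (A (S' m)).mulVec (y m) = (A (S m)).mulVec (y m) := by
    intro m
    by_cases hmk : m = k
    · subst hmk
      have h1 : S' m = !S m := by
        by_cases hmj : m = j
        · subst hmj; simp [hS', Function.update_self]
        · simp [hS', Function.update_self]
      rw [h1]; exact hmv _ hk0 _
    · by_cases hmj : m = j
      · subst hmj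
        have h1 : S' m = !S m := by
          simp [hS', Function.update_of_ne hmk, Function.update_self]
        rw [h1]; exact hmv _ hj0 _
      · have h1 : S' m = S m := by
          simp [hS', Function.update_of_ne hmk, Function.update_of_ne hmj]
        rw [h1]
  -- the shifted cycle
  set z : Fin n → Fin N → ℝ := fun i => y (i - r) with hz
  have hzcycle : ∀ i : Fin n, z (i + 1) = μ • b + (A (S i)).mulVec (z i) := by
    intro i
    open Fin.CommRing in have e1 : i + 1 - r = (i - r) + 1 := by ring
    have e2 : S' (i - r) = S i := by
      have := hflip (i - r)
      rwa [sub_add_cancel] at this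
    calc z (i + 1) = y ((i - r) + 1) := by rw [hz]; simp only; rw [e1]
      _ = μ • b + (A (S (i - r))).mulVec (y (i - r)) := hcycle (i - r)
      _ = μ • b + (A (S' (i - r))).mulVec (y (i - r)) := by rw [hflipstep]
      _ = μ • b + (A (S i)).mulVec (z i) := by rw [e2]
  have hdstep : ∀ i : Fin n, y (i + 1) - z (i + 1) = (A (S i)).mulVec (y i - z i) := by
    intro i
    rw [hcycle i, hzcycle i, Matrix.mulVec_sub]
    abel
  -- unrolling the recursion
  open Fin.CommRing in
  have key : ∀ m : ℕ, y ((m : Fin n)) - z ((m : Fin n)) =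
      (((List.ofFn fun i : Fin m => A (S (((i : ℕ) : Fin n)))).reverse).prod).mulVec
        (y 0 - z 0) := by
    intro m
    induction m with
    | zero => simp [Matrix.one_mulVec]
    | succ m ih =>
      have hcast : ((m + 1 : ℕ) : Fin n) = (m : Fin n) + 1 := by push_cast; ring
      rw [hcast, hdstep, ih, List.ofFn_succ', List.concat_eq_append, List.reverse_append,
        List.reverse_singleton, List.singleton_append, List.prod_cons,
        ← Matrix.mulVec_mulVec]
      simp
  have hfix : y 0 - z 0 = (wordProd A S).mulVec (y 0 - z 0) := by
    have := key n
    rw [Fin.natCast_self] at this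
    open Fin.CommRing in
    have hlist : (List.ofFn fun i : Fin n => A (S (((i : ℕ) : Fin n)))) =
        List.ofFn fun i : Fin n => A (S i) := by
      congr 1
      funext i
      rw [Fin.cast_val_eq_self]
    rw [hlist] at this
    exact this
  have hzero : y 0 - z 0 = 0 := by
    apply Matrix.eq_zero_of_mulVec_eq_zero hdet
    rw [Matrix.sub_mulVec, Matrix.one_mulVec, ← hfix, sub_self]
  have h00 : y 0 = z 0 := sub_eq_zero.mp hzero
  open Fin.CommRing in
  have hall : ∀ m : ℕ, y ((m : Fin n)) = z ((m : Fin n)) := by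
    intro m
    induction m with
    | zero => simpa using h00
    | succ m ih =>
      have hcast : ((m + 1 : ℕ) : Fin n) = (m : Fin n) + 1 := by push_cast; ring
      rw [hcast, hcycle, hzcycle, ih]
  obtain ⟨i, hi⟩ := hmin (-r) (neg_ne_zero.mpr hr)
  apply hi
  have h1 : y i = z i := by
    have := hall (i : ℕ)
    rwa [Fin.cast_val_eq_self] at this
  rw [h1, hz]
  simp only
  rw [sub_eq_add_neg]
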